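/- Fix an integer n ≥ 1 and let C(n) = S_n ⊗ T_n. Then γ_{C(n)}(1) = 0, the sets Z⁻ and Z⁺ at t = 1 each consist of a single cycle, namely z⁻ = (a₁ + ⋯ + a_{2n+1}) ⊗ A₁ and z⁺ = (a₁ + ⋯ + a_{2n+1}) ⊗ A_{n+1}, every chain w with ∂w = z⁻ + z⁺ contains (with nonzero coefficient) the basis elements a₁ ⊗ B₁ (at bifiltration level (−2n+2, 2n)) and a_{2n+1} ⊗ B_n (at level (2n, −2n+2)), and Υ²_{C(n),1}(s) = (4n−2)s − 4n for s ∈ [0,1] and Υ²_{C(n),1}(s) = (−4n+2)s + 4n − 4 for s ∈ [1,2]. -/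

import Mathlib

open scoped BigOperators

/-- A "pre-complex": a finite distinguished basis `B`, a grading `gr`,
bifiltration functions `alg` and `alex`, and a differential recorded by its
matrix `d` over the field `F₂ = ZMod 2`:  `∂ x = ∑ y, d x y • y`. -/
structure PreComplex where
  B : Type
  fB : Fintype B
  dB : DecidableEq B
  gr : B → ℤ
  alg : B → ℤ
  alex : B → ℤ
  d : B → B → ZMod 2

attribute [instance] PreComplex.fB PreComplex.dB

namespace PreComplex

variable (C : PreComplex)

/-- Chains: F₂-linear combinations of basis elements. -/
abbrev Chain : Type := C.B → ZMod 2

/-- The boundary of a chain, extending `∂ x = ∑ y, d x y • y` linearly. -/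
def bdry (c : C.Chain) : C.Chain := fun y => ∑ x, c x * C.d x y

/-- A chain is homogeneous of grading `k`. -/
def isGraded (c : C.Chain) (k : ℤ) : Prop := ∀ x, c x ≠ 0 → C.gr x = k

def isCycle (c : C.Chain) : Prop := C.bdry c = 0

def isBoundary (c : C.Chain) : Prop := ∃ w : C.Chain, C.bdry w = c

/-- A cycle of grading 0 representing the nonzero class of `H₀(C)`. -/
def GenCycle (z : C.Chain) : Prop :=
  C.isCycle z ∧ C.isGraded z 0 ∧ ¬ C.isBoundary z

/-- The bifiltration level of a basis element. -/
def lev (x : C.B) : ℤ × ℤ := (C.alg x, C.alex x)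

/-- A model knot complex: `∂ ∘ ∂ = 0`; `∂` drops the grading by one and does
not increase either filtration; the homology is one dimensional, concentrated
in grading 0; and the minimum over cycles representing the generator of
`H₀(C)` of their maximal `alg` (resp. `alex`) filtration level is 0. -/
def IsModel : Prop :=
  (∀ x z, (∑ y, C.d x y * C.d y z) = 0) ∧
  (∀ x y, C.d x y ≠ 0 → C.gr y = C.gr x - 1 ∧ C.alg y ≤ C.alg x ∧ C.alex y ≤ C.alex x) ∧
  (∀ k : ℤ, k ≠ 0 → ∀ z : C.Chain, C.isCycle z → C.isGraded z k → C.isBoundary z) ∧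
  (∃ z : C.Chain, C.GenCycle z) ∧
  (∀ z z' : C.Chain, C.GenCycle z → C.GenCycle z' → C.isBoundary (z + z')) ∧
  (∃ z : C.Chain, C.GenCycle z ∧ ∀ x, z x ≠ 0 → C.alg x ≤ 0) ∧
  (∀ z : C.Chain, C.GenCycle z → ∃ x, z x ≠ 0 ∧ 0 ≤ C.alg x) ∧
  (∃ z : C.Chain, C.GenCycle z ∧ ∀ x, z x ≠ 0 → C.alex x ≤ 0) ∧
  (∀ z : C.Chain, C.GenCycle z → ∃ x, z x ≠ 0 ∧ 0 ≤ C.alex x)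

/-- An acyclic complex: conditions (i) and (ii) hold but the homology vanishes. -/
def IsAcyclic : Prop :=
  (∀ x z, (∑ y, C.d x y * C.d y z) = 0) ∧
  (∀ x y, C.d x y ≠ 0 → C.gr y = C.gr x - 1 ∧ C.alg y ≤ C.alg x ∧ C.alex y ≤ C.alex x) ∧
  (∀ z : C.Chain, C.isCycle z → C.isBoundary z)

end PreComplex

/-- `f_t(i,j) = (t/2)·j + (1 − t/2)·i`. -/
noncomputable def fval (t : ℝ) (p : ℤ × ℤ) : ℝ :=
  (t / 2) * (p.2 : ℝ) + (1 - t / 2) * (p.1 : ℝ)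

namespace PreComplex

variable (C : PreComplex)

/-- A chain lies in the subcomplex `F_{t,s}`. -/
def inF (t s : ℝ) (c : C.Chain) : Prop :=
  ∀ x, c x ≠ 0 → fval t (C.lev x) ≤ s

/-- `γ_C(t)`: the minimal `s` such that `H₀(F_{t,s}) → H₀(C)` is surjective,
i.e. such that `F_{t,s}` contains a cycle representing the generator. -/
noncomputable def gamma (t : ℝ) : ℝ :=
  sInf {s : ℝ | ∃ z : C.Chain, C.GenCycle z ∧ C.inF t s z}

/-- The Upsilon invariant `Υ_C(t) = −2 γ_C(t)`. -/
noncomputable def Upsilon (t : ℝ) : ℝ := -2 * C.gamma t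

/-- `P`: the set of bifiltration levels of basis elements. -/
def PSet : Set (ℤ × ℤ) := Set.range C.lev

/-- `P_u = { p ∈ P : f_u(p) = γ_C(u) }`. -/
def Pt (u : ℝ) : Set (ℤ × ℤ) := {p ∈ C.PSet | fval u p = C.gamma u}

/-- `p` is the negative pivot point of `C` at `t`. -/
def IsNegPivot (t : ℝ) (p : ℤ × ℤ) : Prop :=
  ∃ δ₀ > (0 : ℝ), ∀ δ : ℝ, 0 < δ → δ < δ₀ → C.Pt (t - δ) ∩ C.Pt t = {p}

/-- `p` is the positive pivot point of `C` at `t`. -/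
def IsPosPivot (t : ℝ) (p : ℤ × ℤ) : Prop :=
  ∃ δ₀ > (0 : ℝ), ∀ δ : ℝ, 0 < δ → δ < δ₀ → C.Pt (t + δ) ∩ C.Pt t = {p}

/-- Cycles in `F_{t−δ, γ_C(t−δ)}` representing the nonzero class of `H₀(C)`. -/
def ZminusAt (t δ : ℝ) : Set C.Chain :=
  {z | C.GenCycle z ∧ C.inF (t - δ) (C.gamma (t - δ)) z}

/-- Cycles in `F_{t+δ, γ_C(t+δ)}` representing the nonzero class of `H₀(C)`. -/
def ZplusAt (t δ : ℝ) : Set C.Chain :=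
  {z | C.GenCycle z ∧ C.inF (t + δ) (C.gamma (t + δ)) z}

/-- `Z⁻`: the (eventual, for all sufficiently small `δ > 0`) set of cycles in
`F_{t−δ, γ_C(t−δ)}` representing the nonzero class of `H₀(C)`. -/
def Zminus (t : ℝ) : Set C.Chain :=
  {z | ∃ δ₀ > (0 : ℝ), ∀ δ : ℝ, 0 < δ → δ < δ₀ → z ∈ C.ZminusAt t δ}

/-- `Z⁺`: the (eventual, for all sufficiently small `δ > 0`) set of cycles in
`F_{t+δ, γ_C(t+δ)}` representing the nonzero class of `H₀(C)`. -/
def Zplus (t : ℝ) : Set C.Chain :=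
  {z | ∃ δ₀ > (0 : ℝ), ∀ δ : ℝ, 0 < δ → δ < δ₀ → z ∈ C.ZplusAt t δ}

/-- A basis element lies in the subcomplex `F_{t,γ_C(t)} + F_{s,r}`. -/
def inRegion (t s r : ℝ) (x : C.B) : Prop :=
  fval t (C.lev x) ≤ C.gamma t ∨ fval s (C.lev x) ≤ r

/-- `z` and `z'` represent the same homology class in `H₀(F_{t,γ_C(t)} + F_{s,r})`
(over F₂ the difference `z − z'` is `z + z'`). -/
def sameClass (t s r : ℝ) (z z' : C.Chain) : Prop :=
  (∀ x, z x ≠ 0 → C.inRegion t s r x) ∧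
  (∀ x, z' x ≠ 0 → C.inRegion t s r x) ∧
  ∃ w : C.Chain, (∀ x, w x ≠ 0 → C.inRegion t s r x) ∧ C.bdry w = z + z'

/-- The set of `r` for which some `z⁻ ∈ Z⁻` and `z⁺ ∈ Z⁺` represent the same
class in `H₀(F_{t,γ_C(t)} + F_{s,r})`. -/
def gamma2Set (t s : ℝ) : Set ℝ :=
  {r | ∃ zm ∈ C.Zminus t, ∃ zp ∈ C.Zplus t, C.sameClass t s r zm zp}

/-- `γ²_{C,t}(s)`, as an extended real: the minimum of `gamma2Set`
(`−∞` if the condition holds for every `r`). -/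
noncomputable def gamma2 (t s : ℝ) : EReal :=
  sInf ((fun r : ℝ => (r : EReal)) '' C.gamma2Set t s)

/-- `Υ²_{C,t}(s) = −2 (γ²_{C,t}(s) − γ_C(t))`. -/
noncomputable def Upsilon2 (t s : ℝ) : EReal :=
  (-2 : EReal) * (C.gamma2 t s - (C.gamma t : EReal))

end PreComplex

/-- The jump of the derivative of `f` at `t`: the right-hand derivative minus
the left-hand derivative. -/
noncomputable def derivJump (f : ℝ → ℝ) (t : ℝ) : ℝ :=
  derivWithin f (Set.Ici t) t - derivWithin f (Set.Iic t) t

/-- Direct sum of two pre-complexes. -/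
def PreComplex.dsum (C A : PreComplex) : PreComplex where
  B := C.B ⊕ A.B
  fB := inferInstance
  dB := inferInstance
  gr := Sum.elim C.gr A.gr
  alg := Sum.elim C.alg A.alg
  alex := Sum.elim C.alex A.alex
  d := fun x y =>
    match x, y with
    | Sum.inl x, Sum.inl y => C.d x y
    | Sum.inr x, Sum.inr y => A.d x y
    | _, _ => 0

/-- Tensor product of two pre-complexes. -/
def PreComplex.tensor (C₁ C₂ : PreComplex) : PreComplex where
  B := C₁.B × C₂.B
  fB := inferInstance
  dB := inferInstance
  gr := fun x => C₁.gr x.1 + C₂.gr x.2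
  alg := fun x => C₁.alg x.1 + C₂.alg x.2
  alex := fun x => C₁.alex x.1 + C₂.alex x.2
  d := fun x y =>
    (if x.2 = y.2 then C₁.d x.1 y.1 else 0) + (if x.1 = y.1 then C₂.d x.2 y.2 else 0)

/-- An isomorphism of pre-complexes: a bijection of the distinguished bases
preserving `gr`, `alg`, `alex`, whose linear extension commutes with the
differentials. -/
def PreComplex.Iso (C₁ C₂ : PreComplex) : Prop :=
  ∃ e : C₁.B ≃ C₂.B,
    (∀ x, C₂.gr (e x) = C₁.gr x) ∧
    (∀ x, C₂.alg (e x) = C₁.alg x) ∧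
    (∀ x, C₂.alex (e x) = C₁.alex x) ∧
    (∀ x y, C₂.d (e x) (e y) = C₁.d x y)

/-- Stable equivalence of pre-complexes: isomorphism after adding acyclic
summands. -/
def PreComplex.StablyEquiv (C₁ C₂ : PreComplex) : Prop :=
  ∃ A₁ A₂ : PreComplex, A₁.IsAcyclic ∧ A₂.IsAcyclic ∧ (C₁.dsum A₁).Iso (C₂.dsum A₂)

/-- The staircase complex `S_n` (a model, mod acyclics, for `CFK∞` of `n`
copies of `T(4,5) # −T(2,3;2,5)`): grading-0 generators `A₁,…,A_{n+1}`
(0-indexed: `A_j` at level `(2j, 2n−2j)`) and grading-1 generators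
`B₁,…,B_n` (0-indexed: `B_j` at level `(2j+2, 2n−2j)`), with
`∂B_j = A_j + A_{j+1}`. -/
def Sc (n : ℕ) : PreComplex where
  B := Fin (n + 1) ⊕ Fin n
  fB := inferInstance
  dB := inferInstance
  gr := Sum.elim (fun _ => 0) (fun _ => 1)
  alg := Sum.elim (fun j => 2 * (j : ℤ)) (fun j => 2 * (j : ℤ) + 2)
  alex := Sum.elim (fun j => 2 * (n : ℤ) - 2 * (j : ℤ)) (fun j => 2 * (n : ℤ) - 2 * (j : ℤ))
  d := fun x y =>
    match x, y with
    | Sum.inr j, Sum.inl i => if i.val = j.val ∨ i.val = j.val + 1 then 1 else 0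
    | _, _ => 0

/-- The complex `T_n` (a model, mod acyclics, for `CFK∞(−nT(2,5))`):
grading-0 generators `a₁,…,a_{2n+1}` (0-indexed: `a_i` at level
`(i − 2n, −i)`) and grading-(−1) generators `b₁,…,b_{2n}` (0-indexed: `b_i`
at level `(i − 2n, −i − 1)`), with `∂a_i = b_{i−1} + b_i` (omitting
out-of-range terms). -/
def Tc (n : ℕ) : PreComplex where
  B := Fin (2 * n + 1) ⊕ Fin (2 * n)
  fB := inferInstance
  dB := inferInstance
  gr := Sum.elim (fun _ => 0) (fun _ => -1)
  alg := Sum.elim (fun i => (i : ℤ) - 2 * (n : ℤ)) (fun i => (i : ℤ) - 2 * (n : ℤ))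
  alex := Sum.elim (fun i => -(i : ℤ)) (fun i => -(i : ℤ) - 1)
  d := fun x y =>
    match x, y with
    | Sum.inl i, Sum.inr j => if j.val + 1 = i.val ∨ j.val = i.val then 1 else 0
    | _, _ => 0

/-- `C(n) = S_n ⊗ T_n`. -/
def Cprod (n : ℕ) : PreComplex := (Sc n).tensor (Tc n)

/-- The cycle `z⁻ = (a₁ + ⋯ + a_{2n+1}) ⊗ A₁`. -/
def zminusC (n : ℕ) : (Cprod n).Chain :=
  fun p => @ite _ (p.1 = Sum.inl (⟨0, Nat.succ_pos n⟩ : Fin (n + 1)) ∧ p.2.isLeft = true)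
    (@instDecidableAnd _ _ ((Sc n).dB _ _) _) 1 0

/-- The cycle `z⁺ = (a₁ + ⋯ + a_{2n+1}) ⊗ A_{n+1}`. -/
def zplusC (n : ℕ) : (Cprod n).Chain :=
  fun p => @ite _ (p.1 = Sum.inl (Fin.last n) ∧ p.2.isLeft = true)
    (@instDecidableAnd _ _ ((Sc n).dB _ _) _) 1 0


namespace Step

variable {n : ℕ}

lemma d_eval (x y : (Cprod n).B) :
    (Cprod n).d x y =
      (if x.2 = y.2 then (Sc n).d x.1 y.1 else 0) +
      (if x.1 = y.1 then (Tc n).d x.2 y.2 else 0) := rfl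

-- boundary at Aa(k,m)
lemma bdry_aa (w : (Cprod n).Chain) (k : Fin (n+1)) (m : Fin (2*n+1)) :
    (Cprod n).bdry w (Sum.inl k, Sum.inl m) =
      ∑ j : Fin n, (if k.val = j.val ∨ k.val = j.val + 1
        then w (Sum.inr j, Sum.inl m) else 0) := by
  unfold PreComplex.bdry
  change ∑ x : (Fin (n+1) ⊕ Fin n) × (Fin (2*n+1) ⊕ Fin (2*n)),
      w x * (Cprod n).d x (Sum.inl k, Sum.inl m) = _
  rw [Fintype.sum_prod_type]
  rw [Fintype.sum_sum_type]
  simp only [Fintype.sum_sum_type]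
  simp only [Cprod, PreComplex.tensor]
  simp [d_eval, Sc, Tc, mul_ite]

lemma bdry_ab (w : (Cprod n).Chain) (k : Fin (n+1)) (m : Fin (2*n)) :
    (Cprod n).bdry w (Sum.inl k, Sum.inr m) =
      (∑ j : Fin n, (if k.val = j.val ∨ k.val = j.val + 1
        then w (Sum.inr j, Sum.inr m) else 0)) +
      (∑ i : Fin (2*n+1), (if m.val + 1 = i.val ∨ m.val = i.val
        then w (Sum.inl k, Sum.inl i) else 0)) := by
  unfold PreComplex.bdry
  change ∑ x : (Fin (n+1) ⊕ Fin n) × (Fin (2*n+1) ⊕ Fin (2*n)),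
      w x * (Cprod n).d x (Sum.inl k, Sum.inr m) = _
  rw [Fintype.sum_prod_type]
  rw [Fintype.sum_sum_type]
  simp only [Fintype.sum_sum_type]
  simp only [Cprod, PreComplex.tensor]
  simp [d_eval, Sc, Tc, mul_ite]
  exact add_comm _ _

lemma bdry_bb (w : (Cprod n).Chain) (j : Fin n) (m : Fin (2*n)) :
    (Cprod n).bdry w (Sum.inr j, Sum.inr m) =
      ∑ i : Fin (2*n+1), (if m.val + 1 = i.val ∨ m.val = i.val
        then w (Sum.inr j, Sum.inl i) else 0) := by
  unfold PreComplex.bdry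
  change ∑ x : (Fin (n+1) ⊕ Fin n) × (Fin (2*n+1) ⊕ Fin (2*n)),
      w x * (Cprod n).d x (Sum.inr j, Sum.inr m) = _
  rw [Fintype.sum_prod_type]
  rw [Fintype.sum_sum_type]
  simp only [Fintype.sum_sum_type]
  simp only [Cprod, PreComplex.tensor]
  simp [d_eval, Sc, Tc, mul_ite]

lemma bdry_ba (w : (Cprod n).Chain) (j : Fin n) (m : Fin (2*n+1)) :
    (Cprod n).bdry w (Sum.inr j, Sum.inl m) = 0 := by
  unfold PreComplex.bdry
  change ∑ x : (Fin (n+1) ⊕ Fin n) × (Fin (2*n+1) ⊕ Fin (2*n)),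
      w x * (Cprod n).d x (Sum.inr j, Sum.inl m) = 0
  rw [Fintype.sum_prod_type]
  rw [Fintype.sum_sum_type]
  simp only [Fintype.sum_sum_type]
  simp only [Cprod, PreComplex.tensor]
  simp [d_eval, Sc, Tc, mul_ite]

lemma fin_eq {N : ℕ} (j : Fin N) (v : ℕ) (hv : v < N) (h : j.val = v) : j = ⟨v, hv⟩ := by
  rw [Fin.ext_iff]; simp only [Fin.val_mk]; omega

lemma sum_step_zero (hn : 0 < n) (e : Fin n → ZMod 2) (k : Fin (n+1)) (hk : k.val = 0) :
    (∑ j : Fin n, (if k.val = j.val ∨ k.val = j.val + 1 then e j else 0))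
      = e ⟨0, hn⟩ := by
  rw [Finset.sum_eq_single (⟨0, hn⟩ : Fin n)]
  · simp [hk]
  · intro j _ hj
    have : ¬ (k.val = j.val ∨ k.val = j.val + 1) := by
      rintro (h | h)
      · exact hj (fin_eq j 0 hn (by omega))
      · omega
    simp [this]
  · simp

lemma sum_step_last (hn : 0 < n) (e : Fin n → ZMod 2) (k : Fin (n+1)) (hk : k.val = n) :
    (∑ j : Fin n, (if k.val = j.val ∨ k.val = j.val + 1 then e j else 0))
      = e ⟨n - 1, by omega⟩ := by
  rw [Finset.sum_eq_single (⟨n - 1, by omega⟩ : Fin n)]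
  · have h2 : k.val = (n-1) + 1 := by omega
    simp [h2]
  · intro j _ hj
    have hjn : j.val < n := j.isLt
    have : ¬ (k.val = j.val ∨ k.val = j.val + 1) := by
      rintro (h | h)
      · omega
      · exact hj (fin_eq j (n-1) (by omega) (by omega))
    simp [this]
  · simp

lemma sum_step_mid (e : Fin n → ZMod 2) (k : Fin (n+1)) (h1 : 0 < k.val) (h2 : k.val < n) :
    (∑ j : Fin n, (if k.val = j.val ∨ k.val = j.val + 1 then e j else 0))
      = e ⟨k.val, h2⟩ + e ⟨k.val - 1, by omega⟩ := by
  rw [← Finset.sum_filter]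
  have hfe : (Finset.univ.filter (fun j : Fin n => k.val = j.val ∨ k.val = j.val + 1))
      = {⟨k.val, h2⟩, ⟨k.val - 1, by omega⟩} := by
    ext j
    simp only [Finset.mem_filter, Finset.mem_univ, true_and, Finset.mem_insert,
      Finset.mem_singleton]
    constructor
    · rintro (h | h)
      · left; exact fin_eq j k.val h2 (by omega)
      · right; exact fin_eq j (k.val - 1) (by omega) (by omega)
    · rintro (h | h)
      · rw [h]; left; rfl
      · rw [h]; right; simp only [Fin.val_mk]; omega
  rw [hfe, Finset.sum_pair]
  intro h
  have := congrArg Fin.val h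
  simp only [Fin.val_mk] at this
  omega

lemma sum_pairT (g : Fin (2*n+1) → ZMod 2) (m : Fin (2*n)) :
    (∑ i : Fin (2*n+1), (if m.val + 1 = i.val ∨ m.val = i.val then g i else 0))
      = g ⟨m.val, by omega⟩ + g ⟨m.val + 1, by omega⟩ := by
  have hm := m.isLt
  rw [← Finset.sum_filter]
  have hfe : (Finset.univ.filter (fun i : Fin (2*n+1) => m.val + 1 = i.val ∨ m.val = i.val))
      = {⟨m.val, by omega⟩, ⟨m.val + 1, by omega⟩} := by
    ext i
    simp only [Finset.mem_filter, Finset.mem_univ, true_and, Finset.mem_insert,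
      Finset.mem_singleton]
    constructor
    · rintro (h | h)
      · right; exact fin_eq i (m.val + 1) (by omega) (by omega)
      · left; exact fin_eq i m.val (by omega) (by omega)
    · rintro (h | h)
      · rw [h]; right; rfl
      · rw [h]; left; rfl
  rw [hfe, Finset.sum_pair (by
    intro h
    have := congrArg Fin.val h
    simp only [Fin.val_mk] at this
    omega)]

-- gradings
lemma gr_aa (k : Fin (n+1)) (m : Fin (2*n+1)) :
    (Cprod n).gr (Sum.inl k, Sum.inl m) = 0 := rfl
lemma gr_ba (j : Fin n) (m : Fin (2*n+1)) :
    (Cprod n).gr (Sum.inr j, Sum.inl m) = 1 := rfl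
lemma gr_ab (k : Fin (n+1)) (m : Fin (2*n)) :
    (Cprod n).gr (Sum.inl k, Sum.inr m) = -1 := rfl
lemma gr_bb (j : Fin n) (m : Fin (2*n)) :
    (Cprod n).gr (Sum.inr j, Sum.inr m) = 0 := rfl

-- levels
lemma lev_aa (k : Fin (n+1)) (m : Fin (2*n+1)) :
    (Cprod n).lev (Sum.inl k, Sum.inl m)
      = (2*(k:ℤ) + ((m:ℤ) - 2*n), (2*n - 2*(k:ℤ)) + (-(m:ℤ))) := rfl
lemma lev_ba (j : Fin n) (m : Fin (2*n+1)) :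
    (Cprod n).lev (Sum.inr j, Sum.inl m)
      = ((2*(j:ℤ)+2) + ((m:ℤ) - 2*n), (2*n - 2*(j:ℤ)) + (-(m:ℤ))) := rfl
lemma lev_ab (k : Fin (n+1)) (m : Fin (2*n)) :
    (Cprod n).lev (Sum.inl k, Sum.inr m)
      = (2*(k:ℤ) + ((m:ℤ) - 2*n), (2*n - 2*(k:ℤ)) + (-(m:ℤ) - 1)) := rfl
lemma lev_bb (j : Fin n) (m : Fin (2*n)) :
    (Cprod n).lev (Sum.inr j, Sum.inr m)
      = ((2*(j:ℤ)+2) + ((m:ℤ) - 2*n), (2*n - 2*(j:ℤ)) + (-(m:ℤ) - 1)) := rfl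

-- fval of levels
lemma fval_aa (t : ℝ) (k : Fin (n+1)) (m : Fin (2*n+1)) :
    fval t ((Cprod n).lev (Sum.inl k, Sum.inl m))
      = (1 - t) * (2*(k:ℝ) + (m:ℝ) - 2*(n:ℝ)) := by
  rw [lev_aa]; unfold fval; push_cast; ring

lemma fval_ba (t : ℝ) (j : Fin n) (m : Fin (2*n+1)) :
    fval t ((Cprod n).lev (Sum.inr j, Sum.inl m))
      = (2*(j:ℝ) + 2 + (m:ℝ) - 2*(n:ℝ))
        + (t/2) * (4*(n:ℝ) - 4*(j:ℝ) - 2*(m:ℝ) - 2) := by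
  rw [lev_ba]; unfold fval; push_cast; ring

lemma fval_ba_one (j : Fin n) (m : Fin (2*n+1)) :
    fval 1 ((Cprod n).lev (Sum.inr j, Sum.inl m)) = 1 := by
  rw [fval_ba]; ring

lemma fval_bb_pos (t : ℝ) (ht : |t - 1| ≤ 1/(8*(n:ℝ)+8)) (j : Fin n) (m : Fin (2*n)) :
    0 < fval t ((Cprod n).lev (Sum.inr j, Sum.inr m)) := by
  obtain ⟨hu1, hu2⟩ := abs_le.mp ht
  have hj : ((j:ℕ):ℝ) + 1 ≤ (n:ℝ) := by exact_mod_cast j.isLt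
  have hm : ((m:ℕ):ℝ) + 1 ≤ 2*(n:ℝ) := by exact_mod_cast m.isLt
  have hj0 : (0:ℝ) ≤ ((j:ℕ):ℝ) := Nat.cast_nonneg _
  have hm0 : (0:ℝ) ≤ ((m:ℕ):ℝ) := Nat.cast_nonneg _
  have hpos : (0:ℝ) < 8*(n:ℝ)+8 := by positivity
  have hc : (0:ℝ) < 1/(8*(n:ℝ)+8) := by positivity
  have key3 : 1/(8*(n:ℝ)+8) * (8*(n:ℝ)+8) = 1 := by field_simp
  set D : ℝ := 4*(n:ℝ) - 4*((j:ℕ):ℝ) - 2*((m:ℕ):ℝ) - 3 with hD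
  have hD1 : 0 ≤ (4*(n:ℝ)+3) + D := by rw [hD]; linarith
  have hD2 : 0 ≤ (4*(n:ℝ)+3) - D := by rw [hD]; linarith
  have key1 : 0 ≤ (1/(8*(n:ℝ)+8) - (t-1)) * ((4*(n:ℝ)+3) - D) :=
    mul_nonneg (by linarith) hD2
  have key2 : 0 ≤ ((t-1) + 1/(8*(n:ℝ)+8)) * ((4*(n:ℝ)+3) + D) :=
    mul_nonneg (by linarith) hD1
  have key4 : 1/(8*(n:ℝ)+8) * (4*(n:ℝ)+3) < 1 := by
    calc 1/(8*(n:ℝ)+8) * (4*(n:ℝ)+3) < 1/(8*(n:ℝ)+8) * (8*(n:ℝ)+8) := by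
          apply mul_lt_mul_of_pos_left _ hc; linarith
      _ = 1 := key3
  have hval : fval t ((Cprod n).lev (Sum.inr j, Sum.inr m)) = 1/2 + ((t-1)/2) * D := by
    rw [lev_bb]; unfold fval; rw [hD]; push_cast; ring
  rw [hval]
  nlinarith [key1, key2, key4]

lemma zmod_one (c : ZMod 2) (h : c ≠ 0) : c = 1 := by revert c h; decide

lemma zmod_self (c : ZMod 2) : c + c = 0 := by revert c; decide

-- evaluation of the distinguished cycles
lemma zminus_aa (k : Fin (n+1)) (m : Fin (2*n+1)) :
    zminusC n (Sum.inl k, Sum.inl m) = if k.val = 0 then 1 else 0 := by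
  unfold zminusC
  by_cases h : k.val = 0
  · rw [if_pos h, if_pos]
    exact ⟨by rw [fin_eq k 0 (by omega) h], rfl⟩
  · rw [if_neg h, if_neg]
    rintro ⟨h1, -⟩
    exact h (by have := congrArg (fun x => match x with | Sum.inl a => a.val | Sum.inr _ => 0) h1; simpa using this)

lemma zplus_aa (k : Fin (n+1)) (m : Fin (2*n+1)) :
    zplusC n (Sum.inl k, Sum.inl m) = if k.val = n then 1 else 0 := by
  unfold zplusC
  by_cases h : k.val = n
  · rw [if_pos h, if_pos]
    refine ⟨?_, rfl⟩
    rw [fin_eq k n (by omega) h]; rfl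
  · rw [if_neg h, if_neg]
    rintro ⟨h1, -⟩
    exact h (by have := congrArg (fun x => match x with | Sum.inl a => a.val | Sum.inr _ => 0) h1; simpa [Fin.last] using this)

lemma zminus_r (x1 : Fin (n+1) ⊕ Fin n) (m : Fin (2*n)) :
    zminusC n (x1, Sum.inr m) = 0 := by
  unfold zminusC; rw [if_neg]; rintro ⟨-, h2⟩; simp at h2

lemma zplus_r (x1 : Fin (n+1) ⊕ Fin n) (m : Fin (2*n)) :
    zplusC n (x1, Sum.inr m) = 0 := by
  unfold zplusC; rw [if_neg]; rintro ⟨-, h2⟩; simp at h2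

lemma zminus_b (j : Fin n) (x2 : Fin (2*n+1) ⊕ Fin (2*n)) :
    zminusC n (Sum.inr j, x2) = 0 := by
  unfold zminusC; rw [if_neg]; rintro ⟨h1, -⟩; simp at h1

lemma zplus_b (j : Fin n) (x2 : Fin (2*n+1) ⊕ Fin (2*n)) :
    zplusC n (Sum.inr j, x2) = 0 := by
  unfold zplusC; rw [if_neg]; rintro ⟨h1, -⟩; simp at h1

-- z⁻ and z⁺ are cycles
lemma cycle_zminus : (Cprod n).isCycle (zminusC n) := by
  funext y
  obtain ⟨x1, x2⟩ := y
  rcases x1 with k | j <;> rcases x2 with m | m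
  · rw [bdry_aa]
    erw [Pi.zero_apply]
    exact Finset.sum_eq_zero (fun j _ => by rw [zminus_b]; simp)
  · rw [bdry_ab, sum_pairT (fun i => zminusC n (Sum.inl k, Sum.inl i)) m]
    erw [Pi.zero_apply]
    rw [Finset.sum_eq_zero (fun j _ => by rw [zminus_b]; simp)]
    rw [zminus_aa, zminus_aa, zmod_self, zero_add]
  · rw [bdry_ba]; rfl
  · rw [bdry_bb, sum_pairT (fun i => zminusC n (Sum.inr j, Sum.inl i)) m]
    erw [Pi.zero_apply]
    rw [zminus_b, zminus_b, zero_add]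

lemma cycle_zplus : (Cprod n).isCycle (zplusC n) := by
  funext y
  obtain ⟨x1, x2⟩ := y
  rcases x1 with k | j <;> rcases x2 with m | m
  · rw [bdry_aa]
    erw [Pi.zero_apply]
    exact Finset.sum_eq_zero (fun j _ => by rw [zplus_b]; simp)
  · rw [bdry_ab, sum_pairT (fun i => zplusC n (Sum.inl k, Sum.inl i)) m]
    erw [Pi.zero_apply]
    rw [Finset.sum_eq_zero (fun j _ => by rw [zplus_b]; simp)]
    rw [zplus_aa, zplus_aa, zmod_self, zero_add]
  · rw [bdry_ba]; rfl
  · rw [bdry_bb, sum_pairT (fun i => zplusC n (Sum.inr j, Sum.inl i)) m]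
    erw [Pi.zero_apply]
    rw [zplus_b, zplus_b, zero_add]

lemma graded_zminus : (Cprod n).isGraded (zminusC n) 0 := by
  intro x hx
  obtain ⟨x1, x2⟩ := x
  rcases x1 with k | j
  · rcases x2 with m | m
    · exact gr_aa k m
    · rw [zminus_r] at hx; exact absurd rfl hx
  · erw [zminus_b] at hx; exact absurd rfl hx

lemma graded_zplus : (Cprod n).isGraded (zplusC n) 0 := by
  intro x hx
  obtain ⟨x1, x2⟩ := x
  rcases x1 with k | j
  · rcases x2 with m | m
    · exact gr_aa k m
    · rw [zplus_r] at hx; exact absurd rfl hx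
  · erw [zplus_b] at hx; exact absurd rfl hx

-- the functional φ detecting homology
def phi (n : ℕ) (w : (Cprod n).Chain) : ZMod 2 :=
  ∑ k : Fin (n+1), w (Sum.inl k, Sum.inl ⟨2*n, Nat.lt_succ_self _⟩)

lemma sum_step_dual (c : ZMod 2) (j : Fin n) :
    ∑ k : Fin (n+1), (if k.val = j.val ∨ k.val = j.val + 1 then c else 0) = 0 := by
  rw [← Finset.sum_filter]
  have hfe : (Finset.univ.filter (fun k : Fin (n+1) => k.val = j.val ∨ k.val = j.val + 1))
      = {⟨j.val, by omega⟩, ⟨j.val + 1, by omega⟩} := by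
    have := j.isLt
    ext k
    simp only [Finset.mem_filter, Finset.mem_univ, true_and, Finset.mem_insert,
      Finset.mem_singleton]
    constructor
    · rintro (h | h)
      · left; exact fin_eq k j.val (by omega) h
      · right; exact fin_eq k (j.val+1) (by omega) h
    · rintro (h | h)
      · rw [h]; left; rfl
      · rw [h]; right; rfl
  rw [hfe, Finset.sum_pair (by
    intro h
    have := congrArg Fin.val h
    simp only [Fin.val_mk] at this
    omega)]
  exact zmod_self c

lemma phi_bdry (w : (Cprod n).Chain) : phi n ((Cprod n).bdry w) = 0 := by
  unfold phi
  have : ∀ k : Fin (n+1), (Cprod n).bdry w (Sum.inl k, Sum.inl ⟨2*n, by omega⟩)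
      = ∑ j : Fin n, (if k.val = j.val ∨ k.val = j.val + 1
        then w (Sum.inr j, Sum.inl ⟨2*n, by omega⟩) else 0) := fun k => bdry_aa w k _
  rw [Finset.sum_congr rfl (fun k _ => this k), Finset.sum_comm]
  exact Finset.sum_eq_zero (fun j _ => sum_step_dual _ j)

lemma phi_zminus : phi n (zminusC n) = 1 := by
  unfold phi
  rw [Finset.sum_congr rfl (fun k _ => zminus_aa k ⟨2*n, by omega⟩)]
  rw [Finset.sum_eq_single (⟨0, by omega⟩ : Fin (n+1))]
  · rfl
  · intro k _ hk
    rw [if_neg]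
    intro h; exact hk (fin_eq k 0 (by omega) h)
  · simp

lemma phi_zplus : phi n (zplusC n) = 1 := by
  unfold phi
  rw [Finset.sum_congr rfl (fun k _ => zplus_aa k ⟨2*n, by omega⟩)]
  rw [Finset.sum_eq_single (⟨n, by omega⟩ : Fin (n+1))]
  · simp
  · intro k _ hk
    rw [if_neg]
    intro h; exact hk (fin_eq k n (by omega) h)
  · simp

lemma gen_zminus : (Cprod n).GenCycle (zminusC n) := by
  refine ⟨cycle_zminus, graded_zminus, ?_⟩
  rintro ⟨w, hw⟩
  have := phi_bdry w
  rw [hw, phi_zminus] at this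
  exact one_ne_zero this

lemma gen_zplus : (Cprod n).GenCycle (zplusC n) := by
  refine ⟨cycle_zplus, graded_zplus, ?_⟩
  rintro ⟨w, hw⟩
  have := phi_bdry w
  rw [hw, phi_zplus] at this
  exact one_ne_zero this

lemma zmod_cancel (a b : ZMod 2) (h : a + b = 0) : b = a := by revert a b; decide

lemma bdry_zero : (Cprod n).bdry 0 = 0 := by
  funext y; unfold PreComplex.bdry; simp

lemma gen_ne_zero {z : (Cprod n).Chain} (hz : (Cprod n).GenCycle z) : z ≠ 0 := by
  intro h
  exact hz.2.2 ⟨0, by rw [bdry_zero, h]⟩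

lemma const_aa {z : (Cprod n).Chain} (hc : (Cprod n).isCycle z)
    (hbb : ∀ j m, z (Sum.inr j, Sum.inr m) = 0) (k : Fin (n+1)) :
    ∀ v (hv : v < 2*n+1), z (Sum.inl k, Sum.inl ⟨v, hv⟩)
      = z (Sum.inl k, Sum.inl ⟨0, by omega⟩) := by
  have step : ∀ m' : Fin (2*n), z (Sum.inl k, Sum.inl ⟨m'.val + 1, by omega⟩)
      = z (Sum.inl k, Sum.inl ⟨m'.val, by omega⟩) := by
    intro m'
    have h0 : (Cprod n).bdry z (Sum.inl k, Sum.inr m') = 0 := by rw [hc]; rfl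
    rw [bdry_ab, sum_pairT (fun i => z (Sum.inl k, Sum.inl i)) m'] at h0
    rw [Finset.sum_eq_zero (fun j _ => by rw [hbb]; simp), zero_add] at h0
    exact zmod_cancel _ _ h0
  intro v
  induction v with
  | zero => intro hv; rfl
  | succ v ih =>
    intro hv
    have hv' : v < 2*n := by omega
    rw [step ⟨v, hv'⟩]
    exact ih (by omega)

lemma const_aa' {z : (Cprod n).Chain} (hc : (Cprod n).isCycle z)
    (hbb : ∀ j m, z (Sum.inr j, Sum.inr m) = 0) (k : Fin (n+1)) (m : Fin (2*n+1)) :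
    z (Sum.inl k, Sum.inl m) = z (Sum.inl k, Sum.inl ⟨0, by omega⟩) :=
  const_aa hc hbb k m.val m.isLt

lemma zminus_supp {x : (Cprod n).B} (h : zminusC n x ≠ 0) :
    ∃ (i : Fin (2*n+1)), x = (Sum.inl ⟨0, by omega⟩, Sum.inl i) := by
  obtain ⟨x1, x2⟩ := x
  rcases x1 with k | j
  · rcases x2 with m | m
    · rw [zminus_aa] at h
      by_cases hk : k.val = 0
      · exact ⟨m, by rw [fin_eq k 0 (by omega) hk]; rfl⟩
      · rw [if_neg hk] at h; exact absurd rfl h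
    · rw [zminus_r] at h; exact absurd rfl h
  · erw [zminus_b] at h; exact absurd rfl h

lemma zplus_supp {x : (Cprod n).B} (h : zplusC n x ≠ 0) :
    ∃ (i : Fin (2*n+1)), x = (Sum.inl ⟨n, by omega⟩, Sum.inl i) := by
  obtain ⟨x1, x2⟩ := x
  rcases x1 with k | j
  · rcases x2 with m | m
    · rw [zplus_aa] at h
      by_cases hk : k.val = n
      · exact ⟨m, by rw [fin_eq k n (by omega) hk]; rfl⟩
      · rw [if_neg hk] at h; exact absurd rfl h
    · rw [zplus_r] at h; exact absurd rfl h
  · erw [zplus_b] at h; exact absurd rfl h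

-- z⁻ lies in F_{t,0} for t ≤ 1
lemma inF_zminus (t : ℝ) (ht : t ≤ 1) : (Cprod n).inF t 0 (zminusC n) := by
  intro x hx
  obtain ⟨i, rfl⟩ := zminus_supp hx
  erw [fval_aa]
  have hi : ((i:ℕ):ℝ) ≤ 2*(n:ℝ) := by
    have := i.isLt
    have : ((i:ℕ):ℝ) + 1 ≤ 2*(n:ℝ) + 1 := by exact_mod_cast this
    linarith
  have : (((⟨0, by omega⟩ : Fin (n+1)):ℕ):ℝ) = 0 := by norm_num
  rw [this]
  nlinarith

lemma inF_zplus (t : ℝ) (ht : 1 ≤ t) : (Cprod n).inF t 0 (zplusC n) := by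
  intro x hx
  obtain ⟨i, rfl⟩ := zplus_supp hx
  erw [fval_aa]
  have hi : (0:ℝ) ≤ ((i:ℕ):ℝ) := Nat.cast_nonneg _
  have : (((⟨n, by omega⟩ : Fin (n+1)):ℕ):ℝ) = (n:ℝ) := by norm_num
  rw [this]
  nlinarith

-- the lower bound for gamma
lemma gamma_lb (t : ℝ) (ht : |t - 1| ≤ 1/(8*(n:ℝ)+8)) (s : ℝ)
    (hs : s ∈ {s : ℝ | ∃ z : (Cprod n).Chain, (Cprod n).GenCycle z ∧ (Cprod n).inF t s z}) :
    0 ≤ s := by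
  obtain ⟨z, hz, hin⟩ := hs
  by_cases hbb : ∃ j m, z (Sum.inr j, Sum.inr m) ≠ 0
  · obtain ⟨j, m, h⟩ := hbb
    have h1 := fval_bb_pos t ht j m
    have h2 := hin _ h
    linarith
  · push_neg at hbb
    obtain ⟨x, hx⟩ := Function.ne_iff.mp (gen_ne_zero hz)
    simp only [Pi.zero_apply] at hx
    obtain ⟨x1, x2⟩ := x
    rcases x1 with k | j
    · rcases x2 with m | m
      · -- x = Aa(k,m)
        have h0 : z (Sum.inl k, Sum.inl ⟨0, by omega⟩) ≠ 0 := by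
          rw [← const_aa' hz.1 hbb k m]; exact hx
        have hl : z (Sum.inl k, Sum.inl ⟨2*n, by omega⟩) ≠ 0 := by
          rw [const_aa hz.1 hbb k (2*n) (by omega)]; exact h0
        rcases le_total t 1 with h | h
        · have h2 := hin _ hl
          rw [fval_aa] at h2
          have hk : (0:ℝ) ≤ ((k:ℕ):ℝ) := Nat.cast_nonneg _
          have hc : (((⟨2*n, by omega⟩ : Fin (2*n+1)):ℕ):ℝ) = 2*(n:ℝ) := by push_cast; norm_num
          rw [hc] at h2
          nlinarith
        · have h2 := hin _ h0
          rw [fval_aa] at h2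
          have hk : ((k:ℕ):ℝ) ≤ (n:ℝ) := by
            have := k.isLt
            have : ((k:ℕ):ℝ) + 1 ≤ (n:ℝ) + 1 := by exact_mod_cast this
            linarith
          have hc : (((⟨0, by omega⟩ : Fin (2*n+1)):ℕ):ℝ) = 0 := by norm_num
          rw [hc] at h2
          nlinarith
      · exact absurd (hz.2.1 _ hx) (by rw [gr_ab]; omega)
    · rcases x2 with m | m
      · exact absurd (hz.2.1 _ hx) (by rw [gr_ba]; omega)
      · exact absurd (hbb j m) hx

lemma gamma_eq (t : ℝ) (ht : |t - 1| ≤ 1/(8*(n:ℝ)+8)) : (Cprod n).gamma t = 0 := by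
  have h0 : (0:ℝ) ∈ {s : ℝ | ∃ z : (Cprod n).Chain, (Cprod n).GenCycle z ∧ (Cprod n).inF t s z} := by
    rcases le_total t 1 with h | h
    · exact ⟨zminusC n, gen_zminus, inF_zminus t h⟩
    · exact ⟨zplusC n, gen_zplus, inF_zplus t h⟩
  unfold PreComplex.gamma
  apply le_antisymm
  · exact csInf_le ⟨0, fun s hs => gamma_lb t ht s hs⟩ h0
  · exact le_csInf ⟨0, h0⟩ (fun s hs => gamma_lb t ht s hs)

lemma graded_ba {z : (Cprod n).Chain} (hg : (Cprod n).isGraded z 0) (j : Fin n)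
    (m : Fin (2*n+1)) : z (Sum.inr j, Sum.inl m) = 0 := by
  by_contra h
  have := hg _ h
  rw [gr_ba] at this
  omega

lemma graded_ab {z : (Cprod n).Chain} (hg : (Cprod n).isGraded z 0) (k : Fin (n+1))
    (m : Fin (2*n)) : z (Sum.inl k, Sum.inr m) = 0 := by
  by_contra h
  have := hg _ h
  rw [gr_ab] at this
  omega

lemma cpos : (0:ℝ) < 1/(8*(n:ℝ)+8) := by positivity

lemma Zminus_eq (hn : 1 ≤ n) : (Cprod n).Zminus 1 = {zminusC n} := by
  ext z
  simp only [Set.mem_singleton_iff]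
  constructor
  · rintro ⟨δ₀, hδ₀, hall⟩
    set c : ℝ := 1/(8*(n:ℝ)+8) with hc
    set δ : ℝ := min (δ₀/2) c with hδ
    have hδpos : 0 < δ := lt_min (by linarith) cpos
    have hδlt : δ < δ₀ := lt_of_le_of_lt (min_le_left _ _) (by linarith)
    have hδc : δ ≤ c := min_le_right _ _
    obtain ⟨hz, hin⟩ := hall δ hδpos hδlt
    have habs : |1 - δ - 1| ≤ c := by rw [abs_of_nonpos (by linarith)]; linarith
    rw [gamma_eq (1 - δ) habs] at hin
    have hbb : ∀ j m, z (Sum.inr j, Sum.inr m) = 0 := by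
      intro j m
      by_contra h
      have h1 := fval_bb_pos (1 - δ) habs j m
      have h2 := hin _ h
      linarith
    have hk1 : ∀ k : Fin (n+1), k.val ≠ 0 → ∀ m : Fin (2*n+1),
        z (Sum.inl k, Sum.inl m) = 0 := by
      intro k hk m
      rw [const_aa' hz.1 hbb k m, ← const_aa hz.1 hbb k (2*n) (by omega)]
      by_contra h
      have h2 := hin _ h
      rw [fval_aa] at h2
      have hkc : (1:ℝ) ≤ ((k:ℕ):ℝ) := by exact_mod_cast Nat.one_le_iff_ne_zero.mpr hk
      have hmc : (((⟨2*n, by omega⟩ : Fin (2*n+1)):ℕ):ℝ) = 2*(n:ℝ) := by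
        push_cast; norm_num
      rw [hmc] at h2
      nlinarith
    have h00 : z (Sum.inl ⟨0, by omega⟩, Sum.inl ⟨0, by omega⟩) ≠ 0 := by
      intro h0
      apply gen_ne_zero hz
      funext x
      obtain ⟨x1, x2⟩ := x
      erw [Pi.zero_apply]
      rcases x1 with k | j
      · rcases x2 with m | m
        · by_cases hk : k.val = 0
          · rw [const_aa' hz.1 hbb k m, fin_eq k 0 (by omega) hk]
            exact h0
          · exact hk1 k hk m
        · exact graded_ab hz.2.1 k m
      · rcases x2 with m | m
        · exact graded_ba hz.2.1 j m
        · exact hbb j m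
    funext x
    obtain ⟨x1, x2⟩ := x
    rcases x1 with k | j
    · rcases x2 with m | m
      · rw [zminus_aa]
        by_cases hk : k.val = 0
        · rw [if_pos hk, const_aa' hz.1 hbb k m, fin_eq k 0 (by omega) hk]
          exact zmod_one _ h00
        · rw [if_neg hk]
          exact hk1 k hk m
      · rw [zminus_r]; exact graded_ab hz.2.1 k m
    · rcases x2 with m | m
      · rw [zminus_b]; exact graded_ba hz.2.1 j m
      · rw [zminus_b]; exact hbb j m
  · rintro rfl
    refine ⟨1/(8*(n:ℝ)+8), cpos, fun δ hδ hδc => ⟨gen_zminus, ?_⟩⟩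
    have habs : |1 - δ - 1| ≤ 1/(8*(n:ℝ)+8) := by
      rw [abs_of_nonpos (by linarith)]; linarith
    rw [gamma_eq (1 - δ) habs]
    exact inF_zminus (1 - δ) (by linarith)

lemma Zplus_eq (hn : 1 ≤ n) : (Cprod n).Zplus 1 = {zplusC n} := by
  ext z
  simp only [Set.mem_singleton_iff]
  constructor
  · rintro ⟨δ₀, hδ₀, hall⟩
    set c : ℝ := 1/(8*(n:ℝ)+8) with hc
    set δ : ℝ := min (δ₀/2) c with hδ
    have hδpos : 0 < δ := lt_min (by linarith) cpos
    have hδlt : δ < δ₀ := lt_of_le_of_lt (min_le_left _ _) (by linarith)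
    have hδc : δ ≤ c := min_le_right _ _
    obtain ⟨hz, hin⟩ := hall δ hδpos hδlt
    have habs : |1 + δ - 1| ≤ c := by rw [abs_of_nonneg (by linarith)]; linarith
    rw [gamma_eq (1 + δ) habs] at hin
    have hbb : ∀ j m, z (Sum.inr j, Sum.inr m) = 0 := by
      intro j m
      by_contra h
      have h1 := fval_bb_pos (1 + δ) habs j m
      have h2 := hin _ h
      linarith
    have hk1 : ∀ k : Fin (n+1), k.val ≠ n → ∀ m : Fin (2*n+1),
        z (Sum.inl k, Sum.inl m) = 0 := by
      intro k hk m
      rw [const_aa' hz.1 hbb k m]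
      by_contra h
      have h2 := hin _ h
      rw [fval_aa] at h2
      have hkc : ((k:ℕ):ℝ) ≤ (n:ℝ) - 1 := by
        have hkn : (k:ℕ) + 1 ≤ n := by have := k.isLt; omega
        have : ((k:ℕ):ℝ) + 1 ≤ (n:ℝ) := by exact_mod_cast hkn
        linarith
      have hmc : (((⟨0, by omega⟩ : Fin (2*n+1)):ℕ):ℝ) = 0 := by norm_num
      rw [hmc] at h2
      nlinarith
    have h00 : z (Sum.inl ⟨n, by omega⟩, Sum.inl ⟨0, by omega⟩) ≠ 0 := by
      intro h0
      apply gen_ne_zero hz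
      funext x
      obtain ⟨x1, x2⟩ := x
      erw [Pi.zero_apply]
      rcases x1 with k | j
      · rcases x2 with m | m
        · by_cases hk : k.val = n
          · rw [const_aa' hz.1 hbb k m, fin_eq k n (by omega) hk]
            exact h0
          · exact hk1 k hk m
        · exact graded_ab hz.2.1 k m
      · rcases x2 with m | m
        · exact graded_ba hz.2.1 j m
        · exact hbb j m
    funext x
    obtain ⟨x1, x2⟩ := x
    rcases x1 with k | j
    · rcases x2 with m | m
      · rw [zplus_aa]
        by_cases hk : k.val = n
        · rw [if_pos hk, const_aa' hz.1 hbb k m, fin_eq k n (by omega) hk]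
          exact zmod_one _ h00
        · rw [if_neg hk]
          exact hk1 k hk m
      · rw [zplus_r]; exact graded_ab hz.2.1 k m
    · rcases x2 with m | m
      · rw [zplus_b]; exact graded_ba hz.2.1 j m
      · rw [zplus_b]; exact hbb j m
  · rintro rfl
    refine ⟨1/(8*(n:ℝ)+8), cpos, fun δ hδ hδc => ⟨gen_zplus, ?_⟩⟩
    have habs : |1 + δ - 1| ≤ 1/(8*(n:ℝ)+8) := by
      rw [abs_of_nonneg (by linarith)]; linarith
    rw [gamma_eq (1 + δ) habs]
    exact inF_zplus (1 + δ) (by linarith)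

lemma zmod_cancel' (a : ZMod 2) (h : a + 1 = 0) : a = 1 := by revert a; decide

lemma forced (hn : 1 ≤ n) (w : (Cprod n).Chain)
    (hw : (Cprod n).bdry w = zminusC n + zplusC n) (m : Fin (2*n+1)) :
    ∀ v (hv : v < n), w (Sum.inr ⟨v, hv⟩, Sum.inl m) = 1 := by
  have key : ∀ k : Fin (n+1), (∑ j : Fin n, (if k.val = j.val ∨ k.val = j.val + 1
      then w (Sum.inr j, Sum.inl m) else 0))
      = (if k.val = 0 then 1 else 0) + (if k.val = n then 1 else 0) := by
    intro k
    have := congrFun hw (Sum.inl k, Sum.inl m)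
    rw [bdry_aa] at this
    rw [this]
    show zminusC n _ + zplusC n _ = _
    rw [zminus_aa, zplus_aa]
  intro v
  induction v with
  | zero =>
    intro hv
    have h := key ⟨0, by omega⟩
    rw [sum_step_zero (by omega) _ _ (by norm_num)] at h
    simp only [Fin.val_mk] at h
    rw [if_pos trivial, if_neg (by omega), add_zero] at h
    exact h
  | succ v ih =>
    intro hv
    have h := key ⟨v+1, by omega⟩
    rw [sum_step_mid _ ⟨v+1, by omega⟩ (by norm_num) (by simp only [Fin.val_mk]; omega)] at h
    simp only [Fin.val_mk] at h
    rw [if_neg (by omega), if_neg (by omega)] at h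
    have h2 : w (Sum.inr ⟨v+1-1, by omega⟩, Sum.inl m) = 1 := ih (by omega)
    rw [h2] at h
    apply zmod_cancel'
    rw [h]
    rfl

-- the connecting chain: sum of all Ba generators
def wAll (n : ℕ) : (Cprod n).Chain :=
  fun x => if x.1.isRight = true ∧ x.2.isLeft = true then 1 else 0

lemma wAll_ba (j : Fin n) (m : Fin (2*n+1)) : wAll n (Sum.inr j, Sum.inl m) = 1 := rfl

lemma wAll_supp {x : (Cprod n).B} (h : wAll n x ≠ 0) :
    ∃ (j : Fin n) (i : Fin (2*n+1)), x = (Sum.inr j, Sum.inl i) := by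
  obtain ⟨x1, x2⟩ := x
  rcases x1 with k | j <;> rcases x2 with m | m
  · simp [wAll] at h
  · simp [wAll] at h
  · exact ⟨j, m, rfl⟩
  · simp [wAll] at h

lemma bdry_wAll (hn : 1 ≤ n) : (Cprod n).bdry (wAll n) = zminusC n + zplusC n := by
  funext y
  obtain ⟨x1, x2⟩ := y
  rcases x1 with k | j <;> rcases x2 with m | m
  · rw [bdry_aa]
    show _ = zminusC n _ + zplusC n _
    rw [zminus_aa, zplus_aa]
    rcases Nat.lt_trichotomy 0 k.val with h | h | h
    · rcases Nat.lt_trichotomy k.val n with h2 | h2 | h2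
      · rw [sum_step_mid _ k h h2, wAll_ba, wAll_ba, if_neg (by omega), if_neg (by omega)]
        rfl
      · rw [sum_step_last (by omega) _ k h2, wAll_ba, if_neg (by omega), if_pos h2]
        rfl
      · exact absurd k.isLt (by omega)
    · rw [sum_step_zero (by omega) _ k (by omega), wAll_ba, if_pos (by omega),
        if_neg (by omega)]
      rfl
    · exact absurd h (by omega)
  · rw [bdry_ab, sum_pairT (fun i => wAll n (Sum.inl k, Sum.inl i)) m]
    show _ = zminusC n _ + zplusC n _
    rw [zminus_r, zplus_r]
    have hz1 : ∀ j : Fin n, wAll n (Sum.inr j, Sum.inr m) = 0 := fun j => by simp [wAll]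
    have hz2 : ∀ i : Fin (2*n+1), wAll n (Sum.inl k, Sum.inl i) = 0 := fun i => by
      simp [wAll]
    rw [Finset.sum_eq_zero (fun j _ => by rw [hz1 j]; simp), hz2, hz2]
    simp
  · rw [bdry_ba]
    show _ = zminusC n _ + zplusC n _
    rw [zminus_b, zplus_b]
    rfl
  · rw [bdry_bb, sum_pairT (fun i => wAll n (Sum.inr j, Sum.inl i)) m]
    show wAll n _ + wAll n _ = zminusC n _ + zplusC n _
    rw [zminus_b, zplus_b, wAll_ba, wAll_ba]
    rfl

lemma fval_aa_one (k : Fin (n+1)) (m : Fin (2*n+1)) :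
    fval 1 ((Cprod n).lev (Sum.inl k, Sum.inl m)) = 0 := by
  rw [fval_aa]; ring

lemma gamma_one : (Cprod n).gamma 1 = 0 :=
  gamma_eq 1 (by rw [show (1:ℝ) - 1 = 0 by ring, abs_zero]; positivity)

lemma sameClass_iff (hn : 1 ≤ n) (s r : ℝ) (p : Fin n) (q : Fin (2*n+1))
    (hmax : ∀ (j : Fin n) (i : Fin (2*n+1)),
      fval s ((Cprod n).lev (Sum.inr j, Sum.inl i))
        ≤ fval s ((Cprod n).lev (Sum.inr p, Sum.inl q))) :
    (Cprod n).sameClass 1 s r (zminusC n) (zplusC n)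
      ↔ fval s ((Cprod n).lev (Sum.inr p, Sum.inl q)) ≤ r := by
  constructor
  · rintro ⟨-, -, w, hreg, hw⟩
    have h1 : w (Sum.inr p, Sum.inl q) = 1 := forced hn w hw q p.val p.isLt
    have h2 := hreg (Sum.inr p, Sum.inl q) (by rw [h1]; exact one_ne_zero)
    rcases h2 with h | h
    · rw [fval_ba_one, gamma_one] at h
      linarith
    · exact h
  · intro hr
    refine ⟨?_, ?_, wAll n, ?_, bdry_wAll hn⟩
    · intro x hx
      obtain ⟨i, rfl⟩ := zminus_supp hx
      left
      erw [fval_aa_one, gamma_one]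
    · intro x hx
      obtain ⟨i, rfl⟩ := zplus_supp hx
      left
      erw [fval_aa_one, gamma_one]
    · intro x hx
      obtain ⟨j, i, rfl⟩ := wAll_supp hx
      right
      exact le_trans (hmax j i) hr

lemma gamma2Set_eq (hn : 1 ≤ n) (s : ℝ) (p : Fin n) (q : Fin (2*n+1))
    (hmax : ∀ (j : Fin n) (i : Fin (2*n+1)),
      fval s ((Cprod n).lev (Sum.inr j, Sum.inl i))
        ≤ fval s ((Cprod n).lev (Sum.inr p, Sum.inl q))) :
    (Cprod n).gamma2Set 1 s = Set.Ici (fval s ((Cprod n).lev (Sum.inr p, Sum.inl q))) := by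
  ext r
  unfold PreComplex.gamma2Set
  simp only [Set.mem_setOf_eq, Set.mem_Ici, Zminus_eq hn, Zplus_eq hn,
    Set.mem_singleton_iff]
  constructor
  · rintro ⟨zm, rfl, zp, rfl, hsc⟩
    exact (sameClass_iff hn s r p q hmax).mp hsc
  · intro hr
    exact ⟨zminusC n, rfl, zplusC n, rfl, (sameClass_iff hn s r p q hmax).mpr hr⟩

lemma sInf_image_Ici (a : ℝ) :
    sInf ((fun r : ℝ => (r : EReal)) '' Set.Ici a) = (a : EReal) := by
  apply le_antisymm
  · exact sInf_le ⟨a, le_refl a, rfl⟩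
  · apply le_sInf
    rintro b ⟨r, hr, rfl⟩
    exact EReal.coe_le_coe_iff.mpr hr

lemma upsilon2_eq (hn : 1 ≤ n) (s : ℝ) (p : Fin n) (q : Fin (2*n+1))
    (hmax : ∀ (j : Fin n) (i : Fin (2*n+1)),
      fval s ((Cprod n).lev (Sum.inr j, Sum.inl i))
        ≤ fval s ((Cprod n).lev (Sum.inr p, Sum.inl q))) :
    (Cprod n).Upsilon2 1 s
      = ((-2 * fval s ((Cprod n).lev (Sum.inr p, Sum.inl q)) : ℝ) : EReal) := by
  unfold PreComplex.Upsilon2 PreComplex.gamma2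
  rw [gamma2Set_eq hn s p q hmax, sInf_image_Ici, gamma_one]
  rw [show ((0:ℝ) : EReal) = (0 : EReal) from rfl, sub_zero]
  rw [show (-2 : EReal) = ((-2 : ℝ) : EReal) by
    rw [show ((-2:ℝ)) = -(2:ℝ) by ring, EReal.coe_neg]; norm_num; rfl, ← EReal.coe_mul]

lemma cast_j (hn : 1 ≤ n) : (((⟨n-1, Nat.sub_lt hn Nat.one_pos⟩ : Fin n) : ℕ) : ℝ) = (n:ℝ) - 1 := by
  simp only [Fin.val_mk]
  rw [Nat.cast_sub hn]
  norm_num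

lemma cast_i : (((⟨2*n, Nat.lt_succ_self _⟩ : Fin (2*n+1)) : ℕ) : ℝ) = 2*(n:ℝ) := by
  simp only [Fin.val_mk]
  push_cast
  ring

lemma cast_j0 (hn : 1 ≤ n) : (((⟨0, hn⟩ : Fin n) : ℕ) : ℝ) = 0 := by norm_num

lemma cast_i0 : (((⟨0, Nat.succ_pos _⟩ : Fin (2*n+1)) : ℕ) : ℝ) = 0 := by norm_num

lemma hmax_left (hn : 1 ≤ n) (s : ℝ) (hs1 : s ≤ 1) (j : Fin n) (i : Fin (2*n+1)) :
    fval s ((Cprod n).lev (Sum.inr j, Sum.inl i))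
      ≤ fval s ((Cprod n).lev (Sum.inr (⟨n-1, Nat.sub_lt hn Nat.one_pos⟩ : Fin n),
          Sum.inl (⟨2*n, Nat.lt_succ_self _⟩ : Fin (2*n+1)))) := by
  rw [fval_ba, fval_ba, cast_j hn, cast_i]
  have hj : ((j:ℕ):ℝ) ≤ (n:ℝ) - 1 := by
    have : ((j:ℕ):ℝ) + 1 ≤ (n:ℝ) := by exact_mod_cast j.isLt
    linarith
  have hi : ((i:ℕ):ℝ) ≤ 2*(n:ℝ) := by
    have : ((i:ℕ):ℝ) + 1 ≤ 2*(n:ℝ) + 1 := by exact_mod_cast i.isLt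
    linarith
  nlinarith [mul_nonneg (by linarith : (0:ℝ) ≤ 1 - s)
    (by linarith : (0:ℝ) ≤ 2*((n:ℝ) - 1 - ((j:ℕ):ℝ)) + (2*(n:ℝ) - ((i:ℕ):ℝ)))]

lemma hmax_right (hn : 1 ≤ n) (s : ℝ) (hs1 : 1 ≤ s) (j : Fin n) (i : Fin (2*n+1)) :
    fval s ((Cprod n).lev (Sum.inr j, Sum.inl i))
      ≤ fval s ((Cprod n).lev (Sum.inr (⟨0, hn⟩ : Fin n),
          Sum.inl (⟨0, Nat.succ_pos _⟩ : Fin (2*n+1)))) := by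
  rw [fval_ba, fval_ba]
  have hj : (0:ℝ) ≤ ((j:ℕ):ℝ) := Nat.cast_nonneg _
  have hi : (0:ℝ) ≤ ((i:ℕ):ℝ) := Nat.cast_nonneg _
  nlinarith [mul_nonneg (by linarith : (0:ℝ) ≤ s - 1)
    (by linarith : (0:ℝ) ≤ 2*((j:ℕ):ℝ) + ((i:ℕ):ℝ))]

end Step

/-- for `C(n) = S_n ⊗ T_n`: `γ_{C(n)}(1) = 0`; `Z⁻` and `Z⁺` at
`t = 1` are the singletons `{z⁻}` and `{z⁺}`; every chain `w` with
`∂w = z⁻ + z⁺` contains `a₁ ⊗ B₁` (at level `(−2n+2, 2n)`) and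
`a_{2n+1} ⊗ B_n` (at level `(2n, −2n+2)`); and `Υ²_{C(n),1}(s) = (4n−2)s − 4n`
on `[0,1]` and `= (−4n+2)s + 4n − 4` on `[1,2]`. -/
theorem upsilon2_Cprod (n : ℕ) (hn : 1 ≤ n) :
    (Cprod n).gamma 1 = 0 ∧
    (Cprod n).Zminus 1 = {zminusC n} ∧
    (Cprod n).Zplus 1 = {zplusC n} ∧
    (Cprod n).lev (Sum.inr (⟨0, by omega⟩ : Fin n),
        Sum.inl (⟨0, by omega⟩ : Fin (2 * n + 1))) = (-2 * (n : ℤ) + 2, 2 * (n : ℤ)) ∧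
    (Cprod n).lev (Sum.inr (⟨n - 1, by omega⟩ : Fin n),
        Sum.inl (⟨2 * n, by omega⟩ : Fin (2 * n + 1))) = (2 * (n : ℤ), -2 * (n : ℤ) + 2) ∧
    (∀ w : (Cprod n).Chain, (Cprod n).bdry w = zminusC n + zplusC n →
        w (Sum.inr (⟨0, by omega⟩ : Fin n),
            Sum.inl (⟨0, by omega⟩ : Fin (2 * n + 1))) ≠ 0 ∧
        w (Sum.inr (⟨n - 1, by omega⟩ : Fin n),
            Sum.inl (⟨2 * n, by omega⟩ : Fin (2 * n + 1))) ≠ 0) ∧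
    (∀ s ∈ Set.Icc (0 : ℝ) 1,
        (Cprod n).Upsilon2 1 s = (((4 * (n : ℝ) - 2) * s - 4 * (n : ℝ) : ℝ) : EReal)) ∧
    (∀ s ∈ Set.Icc (1 : ℝ) 2,
        (Cprod n).Upsilon2 1 s
          = (((-4 * (n : ℝ) + 2) * s + 4 * (n : ℝ) - 4 : ℝ) : EReal)) := by

  refine ⟨Step.gamma_one, Step.Zminus_eq hn, Step.Zplus_eq hn, ?_, ?_, ?_, ?_, ?_⟩
  · rw [Step.lev_ba, Prod.mk.injEq]
    constructor <;> simp only [Fin.val_mk] <;> push_cast <;> ring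
  · rw [Step.lev_ba, Prod.mk.injEq]
    constructor <;> simp only [Fin.val_mk] <;> push_cast <;> omega
  · intro w hw
    constructor
    · rw [Step.forced hn w hw _ 0 (by omega)]
      exact one_ne_zero
    · rw [Step.forced hn w hw _ (n-1) (by omega)]
      exact one_ne_zero
  · rintro s ⟨hs0, hs1⟩
    rw [Step.upsilon2_eq hn s ⟨n-1, by omega⟩ ⟨2*n, by omega⟩
      (fun j i => Step.hmax_left hn s hs1 j i)]
    apply congrArg
    rw [Step.fval_ba, Step.cast_j hn, Step.cast_i]
    ring
  · rintro s ⟨hs1, hs2⟩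
    rw [Step.upsilon2_eq hn s ⟨0, by omega⟩ ⟨0, by omega⟩
      (fun j i => Step.hmax_right hn s hs1 j i)]
    apply congrArg
    rw [Step.fval_ba]
    ring
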